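/- Let β be the smallest Pisot number (β³ = β + 1). The transformation τ(z) = βz − ⌊((β²+1)/(2β²))z + 1/2⌋ maps the interval [−β³/(β²+1), β³/(β²+1)) into itself; in particular τ maps [β²/(β²+1), β³/(β²+1)) onto [−β⁻³/(β²+1), β⁻⁴/(β²+1)). -/

import Mathlib

set_option maxHeartbeats 1600000 in
theorem stmt_17 (β : ℝ) (hβ : 1 < β) (hcube : β ^ 3 = β + 1)
    (τ : ℝ → ℝ) (hτ : ∀ z, τ z = β * z - ⌊(β ^ 2 + 1) / (2 * β ^ 2) * z + 1 / 2⌋) :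
    (∀ z ∈ Set.Ico (-(β ^ 3 / (β ^ 2 + 1))) (β ^ 3 / (β ^ 2 + 1)),
      τ z ∈ Set.Ico (-(β ^ 3 / (β ^ 2 + 1))) (β ^ 3 / (β ^ 2 + 1))) ∧
    τ '' Set.Ico (β ^ 2 / (β ^ 2 + 1)) (β ^ 3 / (β ^ 2 + 1)) =
      Set.Ico (-(β ^ (-3 : ℤ) / (β ^ 2 + 1))) (β ^ (-4 : ℤ) / (β ^ 2 + 1)) := by
  have hβ0 : (0:ℝ) < β := by linarith
  have hs : (0:ℝ) < β ^ 2 + 1 := by positivity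
  have hb2 : (0:ℝ) < β ^ 2 := by positivity
  have hβ1 : (0:ℝ) < β + 1 := by linarith
  have hβ2 : β < 2 := by nlinarith [hcube, hb2, hβ0]
  have h4 : β ^ 4 = β ^ 2 + β := by
    rw [show β ^ 4 = β ^ 3 * β from by ring, hcube]; ring
  have h5 : β ^ 5 = β ^ 3 + β ^ 2 := by
    rw [show β ^ 5 = β ^ 4 * β from by ring, h4]; ring
  have h6 : β ^ 6 = β ^ 2 + 2 * β + 1 := by
    rw [show β ^ 6 = β ^ 3 * β ^ 3 from by ring, hcube]; ring
  have hinv3 : β ^ (-3:ℤ) = 1 / (β + 1) := by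
    rw [zpow_neg]; norm_num; exact hcube
  have hinv4 : β ^ (-4:ℤ) = 1 / (β ^ 2 + β) := by
    rw [zpow_neg]; norm_num; exact h4
  have hfloor1 : ∀ z : ℝ, β ^ 2 / (β ^ 2 + 1) ≤ z → z < β ^ 3 / (β ^ 2 + 1) →
      ⌊(β ^ 2 + 1) / (2 * β ^ 2) * z + 1 / 2⌋ = 1 := by
    intro z h1 h2
    have h1' : β ^ 2 ≤ z * (β ^ 2 + 1) := (div_le_iff₀ hs).mp h1
    have h2' : z * (β ^ 2 + 1) < β ^ 3 := (lt_div_iff₀ hs).mp h2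
    rw [Int.floor_eq_iff]
    push_cast
    rw [div_mul_eq_mul_div, div_add' _ _ _ (by positivity), le_div_iff₀ (by positivity),
      div_lt_iff₀ (by positivity)]
    constructor <;> nlinarith
  have hfloor0 : ∀ z : ℝ, -(β ^ 2 / (β ^ 2 + 1)) ≤ z → z < β ^ 2 / (β ^ 2 + 1) →
      ⌊(β ^ 2 + 1) / (2 * β ^ 2) * z + 1 / 2⌋ = 0 := by
    intro z h1 h2
    have h1' : -(β ^ 2) ≤ z * (β ^ 2 + 1) := by
      rw [← neg_div] at h1; exact (div_le_iff₀ hs).mp h1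
    have h2' : z * (β ^ 2 + 1) < β ^ 2 := (lt_div_iff₀ hs).mp h2
    rw [Int.floor_eq_iff]
    push_cast
    rw [div_mul_eq_mul_div, div_add' _ _ _ (by positivity), le_div_iff₀ (by positivity),
      div_lt_iff₀ (by positivity)]
    constructor <;> nlinarith
  have hfloorm : ∀ z : ℝ, -(β ^ 3 / (β ^ 2 + 1)) ≤ z → z < -(β ^ 2 / (β ^ 2 + 1)) →
      ⌊(β ^ 2 + 1) / (2 * β ^ 2) * z + 1 / 2⌋ = -1 := by
    intro z h1 h2
    have h1' : -(β ^ 3) ≤ z * (β ^ 2 + 1) := by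
      rw [← neg_div] at h1; exact (div_le_iff₀ hs).mp h1
    have h2' : z * (β ^ 2 + 1) < -(β ^ 2) := by
      rw [← neg_div] at h2; exact (lt_div_iff₀ hs).mp h2
    rw [Int.floor_eq_iff]
    push_cast
    rw [div_mul_eq_mul_div, div_add' _ _ _ (by positivity), le_div_iff₀ (by positivity),
      div_lt_iff₀ (by positivity)]
    constructor <;> nlinarith
  constructor
  · rintro z ⟨h1, h2⟩
    have h1' : -(β ^ 3) ≤ z * (β ^ 2 + 1) := by
      rw [← neg_div] at h1; exact (div_le_iff₀ hs).mp h1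
    have h2' : z * (β ^ 2 + 1) < β ^ 3 := (lt_div_iff₀ hs).mp h2
    rw [Set.mem_Ico, hτ z, ← neg_div, div_le_iff₀ hs, lt_div_iff₀ hs]
    rcases lt_or_ge z (-(β ^ 2 / (β ^ 2 + 1))) with hc | hc
    · rw [hfloorm z h1 hc]
      have hc' : z * (β ^ 2 + 1) < -(β ^ 2) := by
        rw [← neg_div] at hc; exact (lt_div_iff₀ hs).mp hc
      push_cast
      constructor <;> nlinarith
    · rcases lt_or_ge z (β ^ 2 / (β ^ 2 + 1)) with hd | hd
      · rw [hfloor0 z hc hd]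
        have hc' : -(β ^ 2) ≤ z * (β ^ 2 + 1) := by
          rw [← neg_div] at hc; exact (div_le_iff₀ hs).mp hc
        have hd' : z * (β ^ 2 + 1) < β ^ 2 := (lt_div_iff₀ hs).mp hd
        push_cast
        constructor <;> nlinarith
      · rw [hfloor1 z hd h2]
        have hd' : β ^ 2 ≤ z * (β ^ 2 + 1) := (div_le_iff₀ hs).mp hd
        push_cast
        constructor <;> nlinarith
  · ext w
    simp only [Set.mem_image, Set.mem_Ico]
    rw [hinv3, hinv4, div_div, div_div, ← neg_div]
    constructor
    · rintro ⟨z, ⟨h1, h2⟩, rfl⟩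
      rw [hτ z, hfloor1 z h1 h2]
      have h1' : β ^ 2 ≤ z * (β ^ 2 + 1) := (div_le_iff₀ hs).mp h1
      have h2' : z * (β ^ 2 + 1) < β ^ 3 := (lt_div_iff₀ hs).mp h2
      push_cast
      have e1 : β * (β + 1) * β ^ 2 ≤ β * (β + 1) * (z * (β ^ 2 + 1)) :=
        mul_le_mul_of_nonneg_left h1' (by positivity)
      have e2 : (β ^ 2 + β) * (z * (β ^ 2 + 1)) < (β ^ 2 + β) * β ^ 3 :=
        mul_lt_mul_of_pos_left h2' (by positivity)
      constructor
      · rw [div_le_iff₀ (by positivity : (0:ℝ) < (β + 1) * (β ^ 2 + 1))]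
        nlinarith [e1, hcube, h4, h5, h6]
      · rw [lt_div_iff₀ (by positivity : (0:ℝ) < (β ^ 2 + β) * (β ^ 2 + 1))]
        nlinarith [e2, hcube, h4, h5, h6]
    · rintro ⟨h1, h2⟩
      have h1' : -1 ≤ w * ((β + 1) * (β ^ 2 + 1)) := (div_le_iff₀ (by positivity)).mp h1
      have h2' : w * ((β ^ 2 + β) * (β ^ 2 + 1)) < 1 := (lt_div_iff₀ (by positivity)).mp h2
      have hA : β ^ 2 / (β ^ 2 + 1) ≤ (w + 1) / β := by
        rw [div_le_div_iff₀ hs hβ0]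
        have key : β ^ 2 * β * (β + 1) ≤ (w + 1) * (β ^ 2 + 1) * (β + 1) := by
          nlinarith [h1', hcube, h4]
        exact le_of_mul_le_mul_right key hβ1
      have hB : (w + 1) / β < β ^ 3 / (β ^ 2 + 1) := by
        rw [div_lt_div_iff₀ hβ0 hs]
        have hpos : (0:ℝ) < β ^ 2 + β := by positivity
        have key : (w + 1) * (β ^ 2 + 1) * (β ^ 2 + β) < β ^ 3 * β * (β ^ 2 + β) := by
          nlinarith [h2', hcube, h4, h5, h6]
        exact lt_of_mul_lt_mul_right key (le_of_lt hpos)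
      refine ⟨(w + 1) / β, ⟨hA, hB⟩, ?_⟩
      rw [hτ, hfloor1 _ hA hB]
      push_cast
      field_simp
      ring
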